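/- Let d ≥ 1, let Ω ⊆ ℝ^d be open, let ε > 0 and ς₁, ς₂, ς₃ ∈ ℝ, and let c₁, c₂, c₃ : Ω → ℝ be twice continuously differentiable functions satisfying c₁ + c₂ + c₃ = 1 on Ω. Let β : Ω → ℝ be any function. Define the bulk free energy F(c₁,c₂,c₃) = ∑_{i=1}^3 (ς_i/2) c_i² (1 − c_i)², the total free energy density Ψ = (12/ε) F(c₁,c₂,c₃) + ∑_{i=1}^3 (3/8) ε ς_i |∇c_i|², and the chemical potentials μ_i = (12/ε) (∂F/∂c_i)(c₁,c₂,c₃) − (3/4) ε ς_i Δc_i + β for i = 1,2,3. Then at every point of Ω, componentwise for each j ∈ {1,…,d}: ∑_{i=1}^3 (3/4) ε ς_i ∑_{k=1}^d ∂_k(∂_j c_i · ∂_k c_i) = ∂_j Ψ − ∑_{i=1}^3 μ_i ∂_j c_i, i.e., ∑_{i=1}^3 (3/4) ε ς_i ∇·(∇c_i ⊗ ∇c_i) = ∇Ψ − ∑_{i=1}^3 μ_i ∇c_i. -/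

import Mathlib

/-- Partial derivative of a scalar field on `ℝ^d` in the `k`-th coordinate direction. -/
noncomputable def pderiv' (d : ℕ) (k : Fin d) (f : (Fin d → ℝ) → ℝ) (x : Fin d → ℝ) : ℝ :=
  fderiv ℝ f x (Pi.single k 1)

private lemma hasFDerivAt_pderiv' {d : ℕ} {f : (Fin d → ℝ) → ℝ} {x : Fin d → ℝ}
    (hf : ContDiffAt ℝ 2 f x) (k : Fin d) :
    HasFDerivAt (pderiv' d k f)
      ((ContinuousLinearMap.apply ℝ ℝ (Pi.single k 1 : Fin d → ℝ)).comp
        (fderiv ℝ (fderiv ℝ f) x)) x := by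
  have h1 : ContDiffAt ℝ 1 (fderiv ℝ f) x := hf.fderiv_right (by norm_num)
  have h2 : HasFDerivAt (fderiv ℝ f) (fderiv ℝ (fderiv ℝ f) x) x :=
    (h1.differentiableAt (by norm_num)).hasFDerivAt
  have h3 := ((ContinuousLinearMap.apply ℝ ℝ
      (Pi.single k 1 : Fin d → ℝ)).hasFDerivAt).comp x h2
  exact h3

theorem capillary_stress_identity (d : ℕ) (hd : 1 ≤ d)
    (Ω : Set (Fin d → ℝ)) (hΩ : IsOpen Ω)
    (ε : ℝ) (hε : 0 < ε) (ς : Fin 3 → ℝ)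
    (c : Fin 3 → (Fin d → ℝ) → ℝ)
    (hc : ∀ i, ContDiffOn ℝ 2 (c i) Ω)
    (hsum : ∀ x ∈ Ω, ∑ i : Fin 3, c i x = 1)
    (β : (Fin d → ℝ) → ℝ)
    (Ψ : (Fin d → ℝ) → ℝ)
    (hΨ : ∀ y, Ψ y =
      (12 / ε) * ∑ i : Fin 3, (ς i / 2) * (c i y) ^ 2 * (1 - c i y) ^ 2
        + ∑ i : Fin 3, (3 / 8) * ε * ς i * ∑ k : Fin d, (pderiv' d k (c i) y) ^ 2)
    (μ : Fin 3 → (Fin d → ℝ) → ℝ)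
    (hμ : ∀ i y, μ i y =
      (12 / ε) * (ς i * c i y * (1 - c i y) * (1 - 2 * c i y))
        - (3 / 4) * ε * ς i * (∑ k : Fin d, pderiv' d k (pderiv' d k (c i)) y)
        + β y) :
    ∀ x ∈ Ω, ∀ j : Fin d,
      ∑ i : Fin 3, (3 / 4) * ε * ς i *
          ∑ k : Fin d, pderiv' d k (fun y => pderiv' d j (c i) y * pderiv' d k (c i) y) x
        = pderiv' d j Ψ x - ∑ i : Fin 3, μ i x * pderiv' d j (c i) x := by
  intro x hx j
  have hmem : Ω ∈ nhds x := hΩ.mem_nhds hx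
  have hca : ∀ i, ContDiffAt ℝ 2 (c i) x := fun i => (hc i).contDiffAt hmem
  have hder : ∀ i, DifferentiableAt ℝ (c i) x := fun i => (hca i).differentiableAt (by norm_num)
  set v : Fin d → Fin d → ℝ := fun k => Pi.single k 1 with hv
  set M : Fin 3 → (Fin d → ℝ) →L[ℝ] (Fin d → ℝ) →L[ℝ] ℝ :=
    fun i => fderiv ℝ (fderiv ℝ (c i)) x with hM
  have hL : ∀ i k, HasFDerivAt (pderiv' d k (c i))
      ((ContinuousLinearMap.apply ℝ ℝ (v k)).comp (M i)) x :=
    fun i k => hasFDerivAt_pderiv' (hca i) k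
  have hsymm : ∀ i a b, M i a b = M i b a := by
    intro i a b
    exact ((hca i).isSymmSndFDerivAt (by simp)) a b
  -- second partials
  have hpp : ∀ i a b, pderiv' d a (pderiv' d b (c i)) x = M i (v a) (v b) := by
    intro i a b
    rw [pderiv', (hL i b).fderiv]
    simp [hv]
  -- LHS inner terms
  have hLHS : ∀ i k, pderiv' d k (fun y => pderiv' d j (c i) y * pderiv' d k (c i) y) x
      = pderiv' d j (c i) x * M i (v k) (v k) + pderiv' d k (c i) x * M i (v j) (v k) := by
    intro i k
    rw [pderiv', fderiv_fun_mul (hL i j).differentiableAt (hL i k).differentiableAt,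
      (hL i j).fderiv, (hL i k).fderiv]
    simp [hv, hsymm i (v k) (v j)]
    exact Or.inl (hsymm i _ _)
  -- bulk derivative
  have hbulk : ∀ i, HasFDerivAt (fun y => ς i / 2 * c i y ^ 2 * (1 - c i y) ^ 2)
      ((ς i * c i x * (1 - c i x) * (1 - 2 * c i x)) • fderiv ℝ (c i) x) x := by
    intro i
    have hp : HasDerivAt (fun u : ℝ => ς i / 2 * u ^ 2 * (1 - u) ^ 2)
        (ς i * c i x * (1 - c i x) * (1 - 2 * c i x)) (c i x) := by
      have h1 : HasDerivAt (fun u : ℝ => ς i / 2 * u ^ 2) (ς i / 2 * (2 * c i x)) (c i x) := by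
        simpa using (hasDerivAt_pow 2 (c i x)).const_mul (ς i / 2)
      have h2 : HasDerivAt (fun u : ℝ => (1 - u) ^ 2)
          (2 * (1 - c i x) * (-1)) (c i x) := by
        simpa using ((hasDerivAt_id (c i x)).const_sub 1).fun_pow 2
      have := h1.fun_mul h2
      exact this.congr_deriv (by ring)
    have := hp.comp_hasFDerivAt x (hder i).hasFDerivAt
    simpa [Function.comp_def] using this
  -- gradient-square derivative
  have hgrad : ∀ i, HasFDerivAt (fun y => ∑ k : Fin d, pderiv' d k (c i) y ^ 2)
      (∑ k : Fin d, (2 * pderiv' d k (c i) x) •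
        ((ContinuousLinearMap.apply ℝ ℝ (v k)).comp (M i))) x := by
    intro i
    refine HasFDerivAt.fun_sum fun k _ => ?_
    simpa [pow_two, two_mul, add_smul] using (hL i k).fun_mul (hL i k)
  -- derivative of Ψ
  have hΨfun : Ψ = fun y =>
      (12 / ε) * ∑ i : Fin 3, (ς i / 2) * (c i y) ^ 2 * (1 - c i y) ^ 2
        + ∑ i : Fin 3, (3 / 8) * ε * ς i * ∑ k : Fin d, (pderiv' d k (c i) y) ^ 2 :=
    funext hΨ
  have hΨ' : HasFDerivAt Ψ
      ((12 / ε) • (∑ i : Fin 3,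
          (ς i * c i x * (1 - c i x) * (1 - 2 * c i x)) • fderiv ℝ (c i) x)
        + ∑ i : Fin 3, ((3 : ℝ) / 8 * ε * ς i) • (∑ k : Fin d,
          (2 * pderiv' d k (c i) x) •
            ((ContinuousLinearMap.apply ℝ ℝ (v k)).comp (M i)))) x := by
    rw [hΨfun]
    exact ((HasFDerivAt.fun_sum fun i _ => hbulk i).const_mul (12 / ε)).add
      (HasFDerivAt.fun_sum fun i _ => (hgrad i).const_mul ((3 : ℝ) / 8 * ε * ς i))
  have hΨval : pderiv' d j Ψ x =
      (12 / ε) * ∑ i : Fin 3,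
          (ς i * c i x * (1 - c i x) * (1 - 2 * c i x)) * pderiv' d j (c i) x
        + ∑ i : Fin 3, ((3 : ℝ) / 8 * ε * ς i) * ∑ k : Fin d,
          (2 * pderiv' d k (c i) x) * M i (v j) (v k) := by
    rw [pderiv', hΨ'.fderiv]
    simp [hv, Finset.mul_sum, pderiv']
  -- sum of gradients vanishes
  have h0 : ∑ i : Fin 3, pderiv' d j (c i) x = 0 := by
    have heq : (fun y => ∑ i : Fin 3, c i y) =ᶠ[nhds x] fun _ => (1 : ℝ) :=
      Filter.eventually_of_mem hmem hsum
    have h1 : fderiv ℝ (fun y => ∑ i : Fin 3, c i y) x = 0 := by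
      rw [heq.fderiv_eq]; exact fderiv_const_apply 1
    have h2 : fderiv ℝ (fun y => ∑ i : Fin 3, c i y) x = ∑ i : Fin 3, fderiv ℝ (c i) x :=
      fderiv_fun_sum fun i _ => hder i
    have h3 : (∑ i : Fin 3, fderiv ℝ (c i) x) (v j) = 0 := by
      rw [← h2, h1]; rfl
    simpa [pderiv', ContinuousLinearMap.sum_apply, hv] using h3
  -- put everything together
  calc ∑ i : Fin 3, (3 / 4) * ε * ς i *
        ∑ k : Fin d, pderiv' d k (fun y => pderiv' d j (c i) y * pderiv' d k (c i) y) x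
      = ∑ i : Fin 3, (3 / 4) * ε * ς i *
        ∑ k : Fin d, (pderiv' d j (c i) x * M i (v k) (v k)
          + pderiv' d k (c i) x * M i (v j) (v k)) := by
        refine Finset.sum_congr rfl fun i _ => ?_
        congr 1
        exact Finset.sum_congr rfl fun k _ => hLHS i k
    _ = pderiv' d j Ψ x - ∑ i : Fin 3, μ i x * pderiv' d j (c i) x := by
        rw [hΨval]
        have hμval : ∀ i, μ i x =
            (12 / ε) * (ς i * c i x * (1 - c i x) * (1 - 2 * c i x))
              - (3 / 4) * ε * ς i * (∑ k : Fin d, M i (v k) (v k)) + β x := by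
          intro i
          have hlap : (∑ k : Fin d, pderiv' d k (pderiv' d k (c i)) x)
              = ∑ k : Fin d, M i (v k) (v k) :=
            Finset.sum_congr rfl fun k _ => hpp i k k
          rw [hμ i x, hlap]
        simp only [hμval]
        -- pull out inner-sum atoms
        have e1 : ∀ i, ∑ k : Fin d, (pderiv' d j (c i) x * M i (v k) (v k)
            + pderiv' d k (c i) x * M i (v j) (v k))
            = pderiv' d j (c i) x * (∑ k : Fin d, M i (v k) (v k))
              + ∑ k : Fin d, pderiv' d k (c i) x * M i (v j) (v k) := by
          intro i
          rw [Finset.sum_add_distrib, ← Finset.mul_sum]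
        have e2 : ∀ i, ∑ k : Fin d, (2 * pderiv' d k (c i) x) * M i (v j) (v k)
            = 2 * ∑ k : Fin d, pderiv' d k (c i) x * M i (v j) (v k) := by
          intro i
          rw [Finset.mul_sum]
          exact Finset.sum_congr rfl fun k _ => by ring
        simp only [e1, e2]
        -- expand the μ·∇c sum and use h0
        have e3 : ∑ i : Fin 3,
            ((12 / ε) * (ς i * c i x * (1 - c i x) * (1 - 2 * c i x))
              - (3 / 4) * ε * ς i * (∑ k : Fin d, M i (v k) (v k)) + β x)
              * pderiv' d j (c i) x
            = ∑ i : Fin 3,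
              ((12 / ε) * (ς i * c i x * (1 - c i x) * (1 - 2 * c i x))
                - (3 / 4) * ε * ς i * (∑ k : Fin d, M i (v k) (v k)))
                * pderiv' d j (c i) x
              + β x * ∑ i : Fin 3, pderiv' d j (c i) x := by
          rw [Finset.mul_sum, ← Finset.sum_add_distrib]
          exact Finset.sum_congr rfl fun i _ => by ring
        rw [e3, h0, mul_zero, add_zero, Finset.mul_sum, ← Finset.sum_add_distrib,
          ← Finset.sum_sub_distrib]
        refine Finset.sum_congr rfl fun i _ => ?_
        ring
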